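/- Assume u₀ and u₁ are smooth vector fields on T² such that the pair (u₀,u₁) satisfies Condition B. Then for every C¹ function h : T² → ℝ, all x ∈ T², all (s,t) ∈ [0,∞)², and all ξ ∈ ℝ²: D_x(h(Ψ^{(s,t)}(x))) ξ = D_{(s,t)}(h(Ψ^{(s,t)}(x))) τ_t(x) ξ, where τ_t(x) = -U(Ψ_0^t(x))^{-1} F_0^t(x). -/

import Mathlib

open MeasureTheory Set
noncomputable section

abbrev R2 : Type := EuclideanSpace ℝ (Fin 2)

/-- The lift of an integer vector `m ∈ ℤ²` to `ℝ²`. -/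
def intVec (m : Fin 2 → ℤ) : R2 := WithLp.toLp 2 (fun i => (m i : ℝ))

/-- A fundamental domain `[0,1)²` for the torus `T² = ℝ²/ℤ²`. -/
def Fund : Set R2 := {x | ∀ i, x i ∈ Set.Ico (0 : ℝ) 1}

/-- A function on `ℝ²` descends to the torus iff it is `ℤ²`-periodic. -/
def PeriodicR2 {α : Type*} (f : R2 → α) : Prop :=
  ∀ (m : Fin 2 → ℤ) (x : R2), f (x + intVec m) = f x

/-- `Φ` is the flow of the vector field `u` on the torus (lifted to `ℝ²`). -/
def IsFlowOf (u : R2 → R2) (Φ : ℝ → R2 → R2) : Prop :=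
  (∀ x, Φ 0 x = x) ∧
  (∀ (x : R2) (t : ℝ), HasDerivAt (fun s => Φ s x) (u (Φ t x)) t) ∧
  (∀ (s t : ℝ) (x : R2), Φ (s + t) x = Φ s (Φ t x)) ∧
  (∀ (t : ℝ) (m : Fin 2 → ℤ) (x : R2), Φ t (x + intVec m) = Φ t x + intVec m)

/-- Jacobian determinant of a map `ℝ² → ℝ²`. -/
def jacDet (f : R2 → R2) (x : R2) : ℝ := LinearMap.det (fderiv ℝ f x : R2 →ₗ[ℝ] R2)

/-- A smooth, `ℤ²`-periodic vector field (i.e. a smooth vector field on `T²`). -/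
def SmoothVF (u : R2 → R2) : Prop := ContDiff ℝ (⊤ : ℕ∞) u ∧ PeriodicR2 u

/-- Condition A: the flow has an invariant measure with everywhere positive smooth
density w.r.t. Lebesgue measure, and no fixed points or periodic orbits on the torus. -/
def CondA (u : R2 → R2) (Φ : ℝ → R2 → R2) : Prop :=
  (∃ ρ : R2 → ℝ, ContDiff ℝ (⊤ : ℕ∞) ρ ∧ PeriodicR2 ρ ∧ (∀ x, 0 < ρ x) ∧
      ∀ (t : ℝ) (x : R2), ρ (Φ t x) * |jacDet (Φ t) x| = ρ x) ∧
  (∀ x, u x ≠ 0) ∧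
  (∀ (x : R2) (t : ℝ), 0 < t → ∀ m : Fin 2 → ℤ, Φ t x ≠ x + intVec m)

/-- Condition B: at every point, `u₀(x)` and `u₁(x)` span `ℝ²`. -/
def CondB (u₀ u₁ : R2 → R2) : Prop :=
  ∀ x : R2, Submodule.span ℝ {u₀ x, u₁ x} = ⊤

/-- The matrix `U(x)` with columns `u₁(x)` and `u₀(x)`. -/
def Umat (u₀ u₁ : R2 → R2) (x : R2) : Matrix (Fin 2) (Fin 2) ℝ :=
  Matrix.of fun i j => if j = 0 then u₁ x i else u₀ x i

/-- The backward flow `Ψ^t = Φ^{-t}`. -/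
def Psi (Φ : ℝ → R2 → R2) (t : ℝ) (x : R2) : R2 := Φ (-t) x

/-- `Ψ^{(s,t)} = Ψ₁^s ∘ Ψ₀^t`. -/
def Psi2 (Φ₀ Φ₁ : ℝ → R2 → R2) (s t : ℝ) (x : R2) : R2 := Psi Φ₁ s (Psi Φ₀ t x)

/-- `F^t(x) = D_x Ψ^t(x)`. -/
def Fmat (Φ : ℝ → R2 → R2) (t : ℝ) (x : R2) : R2 →L[ℝ] R2 := fderiv ℝ (Psi Φ t) x

/-- `J_{(s,t)}(x) = det (F₁^s(Ψ₀^t x) F₀^t(x))`. -/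
def Jst (Φ₀ Φ₁ : ℝ → R2 → R2) (s t : ℝ) (x : R2) : ℝ :=
  LinearMap.det (((Fmat Φ₁ s (Psi Φ₀ t x)).comp (Fmat Φ₀ t x)) : R2 →ₗ[ℝ] R2)

/-- The transfer operator `Q`. -/
def Qop (Φ₀ Φ₁ : ℝ → R2 → R2) (lam : ℝ) (h : R2 → ℝ) (x : R2) : ℝ :=
  ∫ s in Set.Ioi (0 : ℝ), ∫ t in Set.Ioi (0 : ℝ),
    lam ^ 2 * Real.exp (-lam * (s + t)) * Jst Φ₀ Φ₁ s t x * h (Psi2 Φ₀ Φ₁ s t x)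

/-- Expectation `E[f(S,T)]` for `S, T` i.i.d. `Exponential(lam)`. -/
def expE (lam : ℝ) (f : ℝ → ℝ → ℝ) : ℝ :=
  ∫ s in Set.Ioi (0 : ℝ), ∫ t in Set.Ioi (0 : ℝ),
    lam ^ 2 * Real.exp (-lam * (s + t)) * f s t

/-- The projections `π₀(s,t) = (s,t)`, `π₁(s,t) = (s,0)`, `π₂(s,t) = (0,t)`. -/
def pimap : Fin 3 → ℝ × ℝ → ℝ × ℝ := ![id, fun p => (p.1, 0), fun p => (0, p.2)]

def uncurry3 (G : R2 → ℝ → ℝ → ℝ) : R2 × ℝ × ℝ → ℝ := fun p => G p.1 p.2.1 p.2.2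

/-- The class `𝒢` of good functions: smooth functions `G(x,s,t)` such that `G` and all of
its partial derivatives are bounded on `T² × [0,∞)²` by polynomials in `(s,t)`,
uniformly in `x`. -/
def GoodClass (G : R2 → ℝ → ℝ → ℝ) : Prop :=
  ContDiff ℝ (⊤ : ℕ∞) (uncurry3 G) ∧
  ∀ n : ℕ, ∃ q : MvPolynomial (Fin 2) ℝ, ∀ x ∈ Fund, ∀ s t : ℝ, 0 ≤ s → 0 ≤ t →
    ‖iteratedFDeriv ℝ n (uncurry3 G) (x, s, t)‖ ≤ MvPolynomial.eval ![s, t] q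

/-- The matrix `τ_t(x) = -U(Ψ₀^t x)⁻¹ F₀^t(x)`. -/
def tauM (u₀ u₁ : R2 → R2) (Φ₀ : ℝ → R2 → R2) (t : ℝ) (x : R2) : Matrix (Fin 2) (Fin 2) ℝ :=
  -((Umat u₀ u₁ (Psi Φ₀ t x))⁻¹ *
      Matrix.of fun k l => Fmat Φ₀ t x (EuclideanSpace.single l 1) k)

/-- `τ_t(x) ξ`, viewed as a direction in the `(s,t)`-plane. -/
def tauVec (u₀ u₁ : R2 → R2) (Φ₀ : ℝ → R2 → R2) (t : ℝ) (x : R2) (ξ : R2) : ℝ × ℝ :=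
  ((tauM u₀ u₁ Φ₀ t x).mulVec (fun i => ξ i) 0, (tauM u₀ u₁ Φ₀ t x).mulVec (fun i => ξ i) 1)

/-- `‖∇ⁿ_x f‖_{L¹(T²)}`. -/
def gradL1 (n : ℕ) (f : R2 → ℝ) : ℝ := ∫ x in Fund, ‖iteratedFDeriv ℝ n f x‖

/-- `max{‖f‖_{L¹}, ‖∇f‖_{L¹}, …, ‖∇ⁿf‖_{L¹}}`. -/
def maxDer (n : ℕ) (f : R2 → ℝ) : ℝ :=
  (Finset.range (n + 1)).sup' ⟨0, Finset.mem_range.mpr n.succ_pos⟩ fun j => gradL1 j f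

/-- Partial-derivative operator `∂ᵢ` for scalar functions. -/
def pdS (i : Fin 2) (f : R2 → ℝ) : R2 → ℝ := fun x => fderiv ℝ f x (EuclideanSpace.single i 1)

/-- Partial-derivative operator `∂ᵢ` for `ℝ²`-valued functions. -/
def pdV (i : Fin 2) (f : R2 → R2) : R2 → R2 := fun x => fderiv ℝ f x (EuclideanSpace.single i 1)

/-- Invariant density pair for the switching process with rate `lam`, characterized by
stationarity against the generator `L f(x,i) = u_i(x)·∇f_i(x) + λ (f_{1-i}(x) - f_i(x))`. -/
def IsInvariantDensityPair (u₀ u₁ : R2 → R2) (lam : ℝ) (ρ₀ ρ₁ : R2 → ℝ) : Prop :=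
  PeriodicR2 ρ₀ ∧ PeriodicR2 ρ₁ ∧ (∀ x, 0 ≤ ρ₀ x) ∧ (∀ x, 0 ≤ ρ₁ x) ∧
  MeasureTheory.IntegrableOn ρ₀ Fund ∧ MeasureTheory.IntegrableOn ρ₁ Fund ∧
  (∫ x in Fund, ρ₀ x) + (∫ x in Fund, ρ₁ x) = 1 ∧
  ∀ f₀ f₁ : R2 → ℝ, ContDiff ℝ (⊤ : ℕ∞) f₀ → ContDiff ℝ (⊤ : ℕ∞) f₁ →
    PeriodicR2 f₀ → PeriodicR2 f₁ →
    (∫ x in Fund, (fderiv ℝ f₀ x (u₀ x) + lam * (f₁ x - f₀ x)) * ρ₀ x) +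
      (∫ x in Fund, (fderiv ℝ f₁ x (u₁ x) + lam * (f₀ x - f₁ x)) * ρ₁ x) = 0


/-! ### Auxiliary development -/

namespace FlowAux

open intervalIntegral ContinuousLinearMap Filter Topology

/-- Continuous periodic functions are bounded. -/
lemma periodic_bounded {F : Type*} [NormedAddCommGroup F] {f : R2 → F}
    (hc : Continuous f) (hp : PeriodicR2 f) : ∃ M : ℝ, 0 ≤ M ∧ ∀ x, ‖f x‖ ≤ M := by
  set S : Set R2 := {x | ∀ i, x i ∈ Set.Icc (0:ℝ) 1} with hS
  have hclosed : IsClosed S := by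
    have : S = ⋂ i, (fun x : R2 => x i) ⁻¹' Set.Icc (0:ℝ) 1 := by
      ext x; simp [hS, Set.mem_iInter]
    rw [this]
    exact isClosed_iInter fun i => isClosed_Icc.preimage ((continuous_apply i).comp (PiLp.continuous_ofLp 2 _))
  have hsub : S ⊆ Metric.closedBall 0 2 := by
    intro x hx
    simp only [Metric.mem_closedBall, dist_zero_right]
    have hnorm : ‖x‖ = Real.sqrt (∑ i, ‖x i‖ ^ 2) := EuclideanSpace.norm_eq x
    rw [hnorm]
    have hsum : (∑ i, ‖x i‖ ^ 2) ≤ 2 := by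
      have : ∀ i : Fin 2, ‖x i‖ ^ 2 ≤ 1 := by
        intro i
        have h := hx i
        have : |x i| ≤ 1 := abs_le.mpr ⟨by linarith [h.1], h.2⟩
        calc ‖x i‖ ^ 2 = |x i| ^ 2 := by rw [Real.norm_eq_abs]
        _ ≤ 1 ^ 2 := by gcongr
        _ = 1 := one_pow 2
      calc (∑ i, ‖x i‖ ^ 2) ≤ ∑ _i : Fin 2, (1:ℝ) := Finset.sum_le_sum fun i _ => this i
      _ = 2 := by simp
    calc Real.sqrt (∑ i, ‖x i‖ ^ 2) ≤ Real.sqrt 4 := by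
          apply Real.sqrt_le_sqrt; linarith
    _ = 2 := by
          rw [show (4:ℝ) = 2 ^ 2 by norm_num, Real.sqrt_sq (by norm_num : (0:ℝ) ≤ 2)]
  have hcomp : IsCompact S :=
    (isCompact_closedBall (0:R2) 2).of_isClosed_subset hclosed hsub
  have hbdd : BddAbove ((fun x => ‖f x‖) '' S) :=
    (hcomp.image (continuous_norm.comp hc)).bddAbove
  obtain ⟨M, hM⟩ := hbdd
  refine ⟨max M 0, le_max_right _ _, fun x => ?_⟩
  set m : Fin 2 → ℤ := fun i => ⌊x i⌋ with hm
  set y : R2 := x - intVec m with hy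
  have hyS : y ∈ S := by
    intro i
    have : y i = Int.fract (x i) := by
      rw [hy]
      show x i - (intVec m) i = _
      simp only [intVec, hm]
      exact Int.self_sub_floor (x i)
    rw [this]
    exact ⟨Int.fract_nonneg _, le_of_lt (Int.fract_lt_one _)⟩
  have hxy : f x = f y := by
    have : x = y + intVec m := by rw [hy]; abel
    rw [this, hp m y]
  rw [hxy]
  exact le_trans (hM ⟨y, hyS, rfl⟩) (le_max_left _ _)

/-- The derivative of a periodic function is periodic. -/
lemma fderiv_periodic {F : Type*} [NormedAddCommGroup F] [NormedSpace ℝ F] {f : R2 → F}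
    (hf : Differentiable ℝ f) (hp : PeriodicR2 f) :
    PeriodicR2 (fun x => fderiv ℝ f x) := by
  intro m x
  have h1 : HasFDerivAt (fun y : R2 => f (y + intVec m)) (fderiv ℝ f (x + intVec m)) x := by
    have := (hf (x + intVec m)).hasFDerivAt.comp x ((hasFDerivAt_id x).add_const (intVec m))
    exact this
  have h2 : (fun y : R2 => f (y + intVec m)) = f := funext fun y => hp m y
  rw [h2] at h1
  exact h1.fderiv.symm

/-- Constants for a smooth periodic vector field. -/
lemma vf_constants {u : R2 → R2} (hu : SmoothVF u) :
    ∃ M K C : ℝ, 0 ≤ M ∧ 0 ≤ K ∧ 0 ≤ C ∧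
      (∀ x, ‖u x‖ ≤ M) ∧ (∀ x, ‖fderiv ℝ u x‖ ≤ K) ∧
      (∀ x y, ‖u x - u y‖ ≤ K * ‖x - y‖) ∧
      (∀ x y, ‖fderiv ℝ u x - fderiv ℝ u y‖ ≤ C * ‖x - y‖) := by
  obtain ⟨hsm, hper⟩ := hu
  have hdiff : Differentiable ℝ u := hsm.differentiable (by simp)
  have hDu : ContDiff ℝ (⊤:ℕ∞) (fderiv ℝ u) := hsm.fderiv_right (by exact_mod_cast le_top)
  have hDuper : PeriodicR2 (fun x => fderiv ℝ u x) := fderiv_periodic hdiff hper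
  obtain ⟨M, hM0, hM⟩ := periodic_bounded hsm.continuous hper
  obtain ⟨K, hK0, hK⟩ := periodic_bounded hDu.continuous hDuper
  have hD2per : PeriodicR2 (fun x => fderiv ℝ (fderiv ℝ u) x) :=
    fderiv_periodic (hDu.differentiable (by simp)) hDuper
  have hD2 : ContDiff ℝ (⊤:ℕ∞) (fderiv ℝ (fderiv ℝ u)) := hDu.fderiv_right (by exact_mod_cast le_top)
  obtain ⟨C, hC0, hC⟩ := periodic_bounded hD2.continuous hD2per
  refine ⟨M, K, C, hM0, hK0, hC0, hM, hK, ?_, ?_⟩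
  · intro x y
    have := Convex.norm_image_sub_le_of_norm_fderiv_le (f := u)
      (fun z _ => hdiff z) (fun z _ => hK z) convex_univ (Set.mem_univ y) (Set.mem_univ x)
    simpa [norm_sub_rev] using this
  · intro x y
    have := Convex.norm_image_sub_le_of_norm_fderiv_le (f := fderiv ℝ u)
      (fun z _ => (hDu.differentiable (by simp)) z) (fun z _ => hC z) convex_univ
      (Set.mem_univ y) (Set.mem_univ x)
    simpa [norm_sub_rev] using this

/-- Picard iterates. -/
noncomputable def Pic (u : R2 → R2) : ℕ → ℝ → R2 → R2
  | 0, _, x => x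
  | (n+1), t, x => x + ∫ r in (0:ℝ)..t, u (Pic u n r x)

/-- Spatial derivatives of the Picard iterates. -/
noncomputable def QPic (u : R2 → R2) : ℕ → ℝ → R2 → R2 →L[ℝ] R2
  | 0, _, _ => ContinuousLinearMap.id ℝ R2
  | (n+1), t, x => ContinuousLinearMap.id ℝ R2 +
      ∫ r in (0:ℝ)..t, ((fderiv ℝ u (Pic u n r x)).comp (QPic u n r x))

section PicProps

variable {u : R2 → R2} {K C M : ℝ}

lemma pic_props (hu : ContDiff ℝ (⊤:ℕ∞) u) (hK0 : 0 ≤ K)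
    (hK : ∀ x, ‖fderiv ℝ u x‖ ≤ K) :
    ∀ n : ℕ, (∀ x, Continuous fun t => Pic u n t x) ∧
      (∀ x, Continuous fun t => QPic u n t x) ∧
      (∀ t, 0 ≤ t → ∀ x, HasFDerivAt (fun y => Pic u n t y) (QPic u n t x) x) ∧
      (∀ t, 0 ≤ t → ∀ x, ‖QPic u n t x‖ ≤ Real.exp (K * t)) := by
  intro n
  induction n with
  | zero =>
    refine ⟨fun x => continuous_const, fun x => continuous_const, ?_, ?_⟩
    · intro t ht x
      exact hasFDerivAt_id x
    · intro t ht x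
      calc ‖QPic u 0 t x‖ ≤ 1 := ContinuousLinearMap.norm_id_le
      _ ≤ Real.exp (K * t) := Real.one_le_exp (by positivity)
  | succ n ih =>
    obtain ⟨ihc1, ihc2, ihd, ihb⟩ := ih
    have hucont := hu.continuous
    have hDucont : Continuous (fderiv ℝ u) :=
      (hu.fderiv_right (m := (⊤:ℕ∞)) (by exact_mod_cast le_top)).continuous
    have hcP : ∀ x, Continuous fun r => u (Pic u n r x) := fun x => hucont.comp (ihc1 x)
    have hintP : ∀ x a b, IntervalIntegrable (fun r => u (Pic u n r x))
        MeasureTheory.volume a b := fun x a b => (hcP x).intervalIntegrable a b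
    have hcQ : ∀ x, Continuous fun r => (fderiv ℝ u (Pic u n r x)).comp (QPic u n r x) :=
      fun x => (hDucont.comp (ihc1 x)).clm_comp (ihc2 x)
    have hc1 : ∀ x, Continuous fun t => Pic u (n+1) t x := by
      intro x
      show Continuous fun t => x + ∫ r in (0:ℝ)..t, u (Pic u n r x)
      exact continuous_const.add (intervalIntegral.continuous_primitive (hintP x) 0)
    have hc2 : ∀ x, Continuous fun t => QPic u (n+1) t x := by
      intro x
      show Continuous fun t => ContinuousLinearMap.id ℝ R2 +
        ∫ r in (0:ℝ)..t, (fderiv ℝ u (Pic u n r x)).comp (QPic u n r x)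
      exact continuous_const.add (intervalIntegral.continuous_primitive
        (fun a b => (hcQ x).intervalIntegrable a b) 0)
    refine ⟨hc1, hc2, ?_, ?_⟩
    · intro t ht x₀
      have main : HasFDerivAt (fun y => ∫ r in (0:ℝ)..t, u (Pic u n r y))
          (∫ r in (0:ℝ)..t, (fderiv ℝ u (Pic u n r x₀)).comp (QPic u n r x₀)) x₀ := by
        apply intervalIntegral.hasFDerivAt_integral_of_dominated_of_fderiv_le
          (F' := fun x r => (fderiv ℝ u (Pic u n r x)).comp (QPic u n r x))
          (bound := fun _ => K * Real.exp (K * t)) (s := Set.univ) Filter.univ_mem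
        · exact Filter.Eventually.of_forall fun x => (hcP x).aestronglyMeasurable
        · exact hintP x₀ 0 t
        · exact (hcQ x₀).aestronglyMeasurable
        · refine Filter.Eventually.of_forall fun r hr x hx => ?_
          rw [Set.uIoc_of_le ht] at hr
          calc ‖(fderiv ℝ u (Pic u n r x)).comp (QPic u n r x)‖
              ≤ ‖fderiv ℝ u (Pic u n r x)‖ * ‖QPic u n r x‖ :=
                ContinuousLinearMap.opNorm_comp_le _ _
          _ ≤ K * Real.exp (K * r) :=
                mul_le_mul (hK _) (ihb r hr.1.le x) (norm_nonneg _) hK0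
          _ ≤ K * Real.exp (K * t) := by
                have := Real.exp_le_exp.mpr (mul_le_mul_of_nonneg_left hr.2 hK0)
                exact mul_le_mul_of_nonneg_left this hK0
        · exact intervalIntegrable_const
        · refine Filter.Eventually.of_forall fun r hr x hx => ?_
          rw [Set.uIoc_of_le ht] at hr
          exact ((hu.differentiable (by simp)) (Pic u n r x)).hasFDerivAt.comp
            x (ihd r hr.1.le x)
      have htot := (hasFDerivAt_id x₀).add main
      show HasFDerivAt (fun y => y + ∫ r in (0:ℝ)..t, u (Pic u n r y)) (QPic u (n+1) t x₀) x₀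
      exact htot
    · intro t ht x
      have hcalc : (∫ r in (0:ℝ)..t, K * Real.exp (K * r)) = Real.exp (K * t) - 1 := by
        have hder : ∀ r ∈ Set.uIcc (0:ℝ) t,
            HasDerivAt (fun r => Real.exp (K * r)) (K * Real.exp (K * r)) r := by
          intro r _
          have := ((hasDerivAt_id r).const_mul K).exp
          simpa [mul_comm] using this
        have h2 := intervalIntegral.integral_eq_sub_of_hasDerivAt hder
          ((continuous_const.mul (Real.continuous_exp.comp (continuous_const.mul continuous_id))).intervalIntegrable 0 t)
        simpa using h2
      have h1 : ‖∫ r in (0:ℝ)..t, (fderiv ℝ u (Pic u n r x)).comp (QPic u n r x)‖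
          ≤ |∫ r in (0:ℝ)..t, K * Real.exp (K * r)| := by
        apply intervalIntegral.norm_integral_le_abs_of_norm_le _
          ((continuous_const.mul (Real.continuous_exp.comp (continuous_const.mul continuous_id))).intervalIntegrable 0 t)
        refine (MeasureTheory.ae_restrict_iff' measurableSet_uIoc).mpr
          (Filter.Eventually.of_forall fun r hr => ?_)
        rw [Set.uIoc_of_le ht] at hr
        calc ‖(fderiv ℝ u (Pic u n r x)).comp (QPic u n r x)‖
            ≤ ‖fderiv ℝ u (Pic u n r x)‖ * ‖QPic u n r x‖ :=
              ContinuousLinearMap.opNorm_comp_le _ _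
        _ ≤ K * Real.exp (K * r) :=
              mul_le_mul (hK _) (ihb r hr.1.le x) (norm_nonneg _) hK0
      rw [hcalc] at h1
      rw [abs_of_nonneg (sub_nonneg.mpr (Real.one_le_exp (by positivity)))] at h1
      show ‖ContinuousLinearMap.id ℝ R2 +
        ∫ r in (0:ℝ)..t, (fderiv ℝ u (Pic u n r x)).comp (QPic u n r x)‖ ≤ Real.exp (K * t)
      calc ‖ContinuousLinearMap.id ℝ R2 +
          ∫ r in (0:ℝ)..t, (fderiv ℝ u (Pic u n r x)).comp (QPic u n r x)‖
          ≤ ‖(ContinuousLinearMap.id ℝ R2 : R2 →L[ℝ] R2)‖ +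
            ‖∫ r in (0:ℝ)..t, (fderiv ℝ u (Pic u n r x)).comp (QPic u n r x)‖ := norm_add_le _ _
      _ ≤ 1 + (Real.exp (K * t) - 1) :=
            add_le_add ContinuousLinearMap.norm_id_le h1
      _ = Real.exp (K * t) := by ring

lemma flow_cont {Φ : ℝ → R2 → R2} (hΦ : IsFlowOf u Φ) (x : R2) :
    Continuous fun r => Φ r x := by
  rw [continuous_iff_continuousAt]
  exact fun r => (hΦ.2.1 x r).continuousAt

/-- Integral representation of the flow. -/
lemma flow_integral {Φ : ℝ → R2 → R2} (hu : Continuous u) (hΦ : IsFlowOf u Φ)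
    (t : ℝ) (x : R2) : Φ t x = x + ∫ r in (0:ℝ)..t, u (Φ r x) := by
  have hcont : Continuous fun r => Φ r x := flow_cont hΦ x
  have hint : IntervalIntegrable (fun r => u (Φ r x)) MeasureTheory.volume 0 t :=
    (hu.comp hcont).intervalIntegrable 0 t
  have := intervalIntegral.integral_eq_sub_of_hasDerivAt
    (f := fun r => Φ r x) (f' := fun r => u (Φ r x))
    (fun r _ => hΦ.2.1 x r) hint
  rw [this]
  show Φ t x = x + (Φ t x - Φ 0 x)
  rw [hΦ.1 x]; abel

lemma flow_move_bound {Φ : ℝ → R2 → R2} (hu : Continuous u) (hΦ : IsFlowOf u Φ)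
    (hM : ∀ x, ‖u x‖ ≤ M) (t : ℝ) (x : R2) : ‖Φ t x - x‖ ≤ M * |t| := by
  have h := flow_integral hu hΦ t x
  have : Φ t x - x = ∫ r in (0:ℝ)..t, u (Φ r x) := by rw [h]; abel
  rw [this]
  have := intervalIntegral.norm_integral_le_of_norm_le_const
    (C := M) (f := fun r => u (Φ r x)) (a := 0) (b := t) (fun r _ => hM _)
  simpa using this

lemma pic_conv {Φ : ℝ → R2 → R2} (hu : ContDiff ℝ (⊤:ℕ∞) u) (hΦ : IsFlowOf u Φ)
    (hK0 : 0 ≤ K) (hK : ∀ x, ‖fderiv ℝ u x‖ ≤ K)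
    (hM : ∀ x, ‖u x‖ ≤ M) (hKlip : ∀ x y, ‖u x - u y‖ ≤ K * ‖x - y‖) :
    ∀ n : ℕ, ∀ t, 0 ≤ t → ∀ x,
      ‖Pic u n t x - Φ t x‖ ≤ M * K ^ n * t ^ (n+1) / (Nat.factorial (n+1)) := by
  have hPic := pic_props hu hK0 hK
  intro n
  induction n with
  | zero =>
    intro t ht x
    show ‖x - Φ t x‖ ≤ _
    rw [norm_sub_rev]
    calc ‖Φ t x - x‖ ≤ M * |t| := flow_move_bound hu.continuous hΦ hM t x
    _ = M * K ^ 0 * t ^ (0+1) / (Nat.factorial (0+1)) := by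
        rw [abs_of_nonneg ht]; simp [Nat.factorial]
  | succ n ih =>
    intro t ht x
    have hdiff : Pic u (n+1) t x - Φ t x
        = ∫ r in (0:ℝ)..t, (u (Pic u n r x) - u (Φ r x)) := by
      have hrep := flow_integral hu.continuous hΦ t x
      show (x + ∫ r in (0:ℝ)..t, u (Pic u n r x)) - Φ t x = _
      have hi1 : IntervalIntegrable (fun r => u (Pic u n r x)) MeasureTheory.volume 0 t :=
        (hu.continuous.comp ((hPic n).1 x)).intervalIntegrable 0 t
      have hi2 : IntervalIntegrable (fun r => u (Φ r x)) MeasureTheory.volume 0 t :=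
        (hu.continuous.comp (flow_cont hΦ x)).intervalIntegrable 0 t
      rw [hrep, intervalIntegral.integral_sub hi1 hi2]
      abel
    rw [hdiff]
    have hgc : Continuous fun r : ℝ =>
        K * (M * K ^ n * r ^ (n + 1) / (Nat.factorial (n + 1) : ℝ)) := by fun_prop
    have h1 : ‖∫ r in (0:ℝ)..t, (u (Pic u n r x) - u (Φ r x))‖
        ≤ |∫ r in (0:ℝ)..t, K * (M * K ^ n * r ^ (n + 1) / (Nat.factorial (n + 1) : ℝ))| := by
      apply intervalIntegral.norm_integral_le_abs_of_norm_le _ (hgc.intervalIntegrable 0 t)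
      refine (MeasureTheory.ae_restrict_iff' measurableSet_uIoc).mpr
        (Filter.Eventually.of_forall fun r hr => ?_)
      rw [Set.uIoc_of_le ht] at hr
      calc ‖u (Pic u n r x) - u (Φ r x)‖ ≤ K * ‖Pic u n r x - Φ r x‖ := hKlip _ _
      _ ≤ K * (M * K ^ n * r ^ (n + 1) / (Nat.factorial (n + 1) : ℝ)) :=
          mul_le_mul_of_nonneg_left (ih r hr.1.le x) hK0
    have h2 : (∫ r in (0:ℝ)..t, K * (M * K ^ n * r ^ (n + 1) / (Nat.factorial (n + 1) : ℝ)))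
        = (K * (M * K ^ n / (Nat.factorial (n + 1) : ℝ))) * (t ^ (n + 2) / (n + 2)) := by
      have : (fun r : ℝ => K * (M * K ^ n * r ^ (n + 1) / (Nat.factorial (n + 1) : ℝ)))
          = fun r : ℝ => (K * (M * K ^ n / (Nat.factorial (n + 1) : ℝ))) * r ^ (n + 1) := by
        funext r; ring
      rw [this, intervalIntegral.integral_const_mul, integral_pow]
      have hz : (0:ℝ) ^ (n + 1 + 1) = 0 := by simp
      rw [hz]
      push_cast
      ring
    have hfac : ((Nat.factorial (n + 2) : ℝ)) = (n + 2) * (Nat.factorial (n + 1) : ℝ) := by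
      rw [Nat.factorial_succ]; push_cast; ring
    have h3 : (K * (M * K ^ n / (Nat.factorial (n + 1) : ℝ))) * (t ^ (n + 2) / (n + 2))
        = M * K ^ (n + 1) * t ^ (n + 2) / (Nat.factorial (n + 2) : ℝ) := by
      rw [hfac]
      have hfp : (0:ℝ) < (Nat.factorial (n + 1) : ℝ) := by
        exact_mod_cast Nat.factorial_pos (n + 1)
      field_simp
      ring
    have h4 : (0:ℝ) ≤ (K * (M * K ^ n / (Nat.factorial (n + 1) : ℝ))) * (t ^ (n + 2) / (n + 2)) := by
      have hM0 : (0:ℝ) ≤ M := le_trans (norm_nonneg _) (hM 0)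
      positivity
    rw [h2, abs_of_nonneg h4] at h1
    rw [h3] at h1
    exact h1

set_option maxHeartbeats 2000000 in
lemma qpic_cauchy {Φ : ℝ → R2 → R2} (hu : ContDiff ℝ (⊤:ℕ∞) u) (hΦ : IsFlowOf u Φ)
    (hM0 : 0 ≤ M) (hK0 : 0 ≤ K) (hC0 : 0 ≤ C)
    (hM : ∀ x, ‖u x‖ ≤ M) (hK : ∀ x, ‖fderiv ℝ u x‖ ≤ K)
    (hKlip : ∀ x y, ‖u x - u y‖ ≤ K * ‖x - y‖)
    (hC : ∀ x y, ‖fderiv ℝ u x - fderiv ℝ u y‖ ≤ C * ‖x - y‖)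
    (T : ℝ) (hT : 0 ≤ T) :
    ∀ n : ℕ, ∀ r, 0 ≤ r → r ≤ T → ∀ x,
      ‖QPic u (n+1) r x - QPic u n r x‖ ≤
        (K + C*M*(1+K*T)*Real.exp (K*T)) * (K+1) ^ n * r ^ (n+1) / (Nat.factorial (n+1)) := by
  have hPic := pic_props hu hK0 hK
  have hDucont : Continuous (fderiv ℝ u) :=
    (hu.fderiv_right (m := (⊤:ℕ∞)) (by exact_mod_cast le_top)).continuous
  set A := K + C*M*(1+K*T)*Real.exp (K*T) with hA
  have hAK : K ≤ A := by
    have : 0 ≤ C*M*(1+K*T)*Real.exp (K*T) := by positivity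
    linarith
  have hA0 : 0 ≤ A := le_trans hK0 hAK
  intro n
  induction n with
  | zero =>
    intro r hr0 hrT x
    show ‖(ContinuousLinearMap.id ℝ R2 +
        ∫ ρ in (0:ℝ)..r, (fderiv ℝ u (Pic u 0 ρ x)).comp (QPic u 0 ρ x)) -
        ContinuousLinearMap.id ℝ R2‖ ≤ _
    rw [add_sub_cancel_left]
    have hconst : (fun ρ:ℝ => (fderiv ℝ u (Pic u 0 ρ x)).comp (QPic u 0 ρ x))
        = fun _:ℝ => (fderiv ℝ u x).comp (ContinuousLinearMap.id ℝ R2) := rfl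
    rw [hconst, intervalIntegral.integral_const, norm_smul, Real.norm_eq_abs,
      ContinuousLinearMap.comp_id, sub_zero, abs_of_nonneg hr0]
    calc r * ‖fderiv ℝ u x‖ ≤ r * K := mul_le_mul_of_nonneg_left (hK x) hr0
    _ ≤ A * (K+1) ^ 0 * r ^ (0+1) / (Nat.factorial (0+1)) := by
        have h := mul_le_mul_of_nonneg_right hAK hr0
        have he : A * (K+1) ^ 0 * r ^ (0+1) / (Nat.factorial (0+1)) = A * r := by
          norm_num
        rw [he, mul_comm]
        exact h
  | succ n ih =>
    intro r hr0 hrT x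
    have hg1c : Continuous fun ρ => (fderiv ℝ u (Pic u (n+1) ρ x)).comp (QPic u (n+1) ρ x) :=
      (hDucont.comp ((hPic (n+1)).1 x)).clm_comp ((hPic (n+1)).2.1 x)
    have hg2c : Continuous fun ρ => (fderiv ℝ u (Pic u n ρ x)).comp (QPic u n ρ x) :=
      (hDucont.comp ((hPic n).1 x)).clm_comp ((hPic n).2.1 x)
    have hdiff : QPic u (n+2) r x - QPic u (n+1) r x
        = ∫ ρ in (0:ℝ)..r, ((fderiv ℝ u (Pic u (n+1) ρ x)).comp (QPic u (n+1) ρ x)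
            - (fderiv ℝ u (Pic u n ρ x)).comp (QPic u n ρ x)) := by
      show (ContinuousLinearMap.id ℝ R2 + _) - (ContinuousLinearMap.id ℝ R2 + _) = _
      rw [add_sub_add_left_eq_sub, ← intervalIntegral.integral_sub
        (hg1c.intervalIntegrable 0 r) (hg2c.intervalIntegrable 0 r)]
    rw [hdiff]
    have key : ∀ ρ, 0 ≤ ρ → ρ ≤ r →
        ‖(fderiv ℝ u (Pic u (n+1) ρ x)).comp (QPic u (n+1) ρ x)
          - (fderiv ℝ u (Pic u n ρ x)).comp (QPic u n ρ x)‖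
        ≤ A * (K+1) ^ (n+1) * ρ ^ (n+1) / (Nat.factorial (n+1)) := by
      intro ρ h0 hρr
      have hρT : ρ ≤ T := le_trans hρr hrT
      set D : ℝ := ρ ^ (n+1) / (Nat.factorial (n+1)) with hD
      set D1 := fderiv ℝ u (Pic u (n+1) ρ x) with hD1
      set D0 := fderiv ℝ u (Pic u n ρ x) with hD0'
      set Q1 := QPic u (n+1) ρ x with hQ1'
      set Q0 := QPic u n ρ x with hQ0'
      have hD0 : 0 ≤ D := by positivity
      have hB0 : 0 ≤ M * K ^ n * ρ ^ (n+1) / (Nat.factorial (n+1)) := by positivity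
      have hP1 : ‖Pic u (n+1) ρ x - Φ ρ x‖ ≤ M * K ^ (n+1) * ρ ^ (n+2) / (Nat.factorial (n+2)) :=
        pic_conv hu hΦ hK0 hK hM hKlip (n+1) ρ h0 x
      have hP0 : ‖Pic u n ρ x - Φ ρ x‖ ≤ M * K ^ n * ρ ^ (n+1) / (Nat.factorial (n+1)) :=
        pic_conv hu hΦ hK0 hK hM hKlip n ρ h0 x
      have hPP : ‖Pic u (n+1) ρ x - Pic u n ρ x‖
          ≤ (1 + K*T) * (M * K ^ n * ρ ^ (n+1) / (Nat.factorial (n+1))) := by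
        have hfac : ((Nat.factorial (n+2) : ℝ)) = (n+2) * (Nat.factorial (n+1)) := by
          rw [Nat.factorial_succ]; push_cast; ring
        have hfp : (0:ℝ) < (Nat.factorial (n+1) : ℝ) := by
          exact_mod_cast Nat.factorial_pos (n+1)
        have e1 : M * K ^ (n+1) * ρ ^ (n+2) / ((Nat.factorial (n+2)) : ℝ)
            = (M * K ^ n * ρ ^ (n+1) / (Nat.factorial (n+1))) * (K * ρ / (n+2)) := by
          rw [hfac]; field_simp; ring
        have h4 : K * ρ / (↑n+2) ≤ K * T := by
          have h5 : K * ρ / (↑n+2) ≤ K * ρ := by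
            apply div_le_self (by positivity)
            have : (0:ℝ) ≤ (n:ℝ) := Nat.cast_nonneg n
            linarith
          exact le_trans h5 (mul_le_mul_of_nonneg_left hρT hK0)
        have h3 : M * K ^ (n+1) * ρ ^ (n+2) / ((Nat.factorial (n+2)) : ℝ)
            ≤ (K*T) * (M * K ^ n * ρ ^ (n+1) / (Nat.factorial (n+1))) := by
          rw [e1]
          calc (M * K ^ n * ρ ^ (n+1) / ((Nat.factorial (n+1)):ℝ)) * (K * ρ / (↑n+2))
              ≤ (M * K ^ n * ρ ^ (n+1) / (Nat.factorial (n+1))) * (K * T) :=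
                mul_le_mul_of_nonneg_left h4 hB0
          _ = (K*T) * (M * K ^ n * ρ ^ (n+1) / (Nat.factorial (n+1))) := by ring
        have htri := dist_triangle (Pic u (n+1) ρ x) (Φ ρ x) (Pic u n ρ x)
        rw [dist_eq_norm, dist_eq_norm, dist_eq_norm] at htri
        rw [norm_sub_rev (Φ ρ x) (Pic u n ρ x)] at htri
        calc ‖Pic u (n+1) ρ x - Pic u n ρ x‖
            ≤ ‖Pic u (n+1) ρ x - Φ ρ x‖ + ‖Pic u n ρ x - Φ ρ x‖ := htri
        _ ≤ (K*T) * (M * K ^ n * ρ ^ (n+1) / (Nat.factorial (n+1)))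
              + M * K ^ n * ρ ^ (n+1) / (Nat.factorial (n+1)) := add_le_add (le_trans hP1 h3) hP0
        _ = (1 + K*T) * (M * K ^ n * ρ ^ (n+1) / (Nat.factorial (n+1))) := by ring
      have hdecomp : D1.comp Q1 - D0.comp Q0
          = (D1 - D0).comp Q1 + D0.comp (Q1 - Q0) := by
        rw [ContinuousLinearMap.sub_comp, ContinuousLinearMap.comp_sub]; abel
      have hQ1n : ‖Q1‖ ≤ Real.exp (K*T) := by
        refine le_trans ((hPic (n+1)).2.2.2 ρ h0 x) ?_
        exact Real.exp_le_exp.mpr (mul_le_mul_of_nonneg_left hρT hK0)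
      have hterm1 : ‖(D1 - D0).comp Q1‖
          ≤ (C * ((1 + K*T) * (M * K ^ n * D))) * Real.exp (K*T) := by
        calc ‖(D1 - D0).comp Q1‖ ≤ ‖D1 - D0‖ * ‖Q1‖ := ContinuousLinearMap.opNorm_comp_le _ _
        _ ≤ (C * ((1 + K*T) * (M * K ^ n * D))) * Real.exp (K*T) := by
            apply mul_le_mul _ hQ1n (norm_nonneg _) (by positivity)
            refine le_trans (hC _ _) ?_
            have e2 : (1 + K*T) * (M * K ^ n * ρ ^ (n+1) / ((Nat.factorial (n+1)):ℝ))
                = (1 + K*T) * (M * K ^ n * D) := by rw [hD]; ring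
            rw [← e2]
            exact mul_le_mul_of_nonneg_left hPP hC0
      have hterm2 : ‖D0.comp (Q1 - Q0)‖ ≤ K * (A * (K+1) ^ n * D) := by
        calc ‖D0.comp (Q1 - Q0)‖ ≤ ‖D0‖ * ‖Q1 - Q0‖ := ContinuousLinearMap.opNorm_comp_le _ _
        _ ≤ K * (A * (K+1) ^ n * D) := by
            apply mul_le_mul (hK _) _ (norm_nonneg _) hK0
            calc ‖Q1 - Q0‖ ≤ A * (K+1) ^ n * ρ ^ (n+1) / (Nat.factorial (n+1)) :=
                  ih ρ h0 hρT x
            _ = A * (K+1) ^ n * D := by rw [hD]; ring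
      have hKn : K ^ n ≤ (K+1) ^ n := by
        apply pow_le_pow_left₀ hK0; linarith
      calc ‖D1.comp Q1 - D0.comp Q0‖
          ≤ ‖(D1 - D0).comp Q1‖ + ‖D0.comp (Q1 - Q0)‖ := by
            rw [hdecomp]; exact norm_add_le _ _
      _ ≤ (C * ((1 + K*T) * (M * K ^ n * D))) * Real.exp (K*T) + K * (A * (K+1) ^ n * D) :=
            add_le_add hterm1 hterm2
      _ = (A - K) * (K ^ n * D) + K * A * ((K+1) ^ n * D) := by rw [hA]; ring
      _ ≤ (A - K) * ((K+1) ^ n * D) + K * A * ((K+1) ^ n * D) := by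
            have h6 : K ^ n * D ≤ (K+1) ^ n * D := mul_le_mul_of_nonneg_right hKn hD0
            have h7 : 0 ≤ A - K := by linarith
            nlinarith [mul_le_mul_of_nonneg_left h6 h7]
      _ ≤ A * (K+1) ^ (n+1) * ρ ^ (n+1) / (Nat.factorial (n+1)) := by
            have hX0 : 0 ≤ (K+1) ^ n * D := by positivity
            have e3 : A * (K+1) ^ (n+1) * ρ ^ (n+1) / ((Nat.factorial (n+1)):ℝ)
                = (A * (K+1)) * ((K+1) ^ n * D) := by rw [hD, pow_succ]; ring
            rw [e3]
            nlinarith [mul_nonneg hK0 hX0, mul_nonneg (mul_nonneg hK0 hA0) hX0]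
    have hgc : Continuous fun ρ:ℝ =>
        A * (K+1) ^ (n+1) * ρ ^ (n+1) / ((Nat.factorial (n+1)) : ℝ) := by fun_prop
    have h1 : ‖∫ ρ in (0:ℝ)..r, ((fderiv ℝ u (Pic u (n+1) ρ x)).comp (QPic u (n+1) ρ x)
          - (fderiv ℝ u (Pic u n ρ x)).comp (QPic u n ρ x))‖
        ≤ |∫ ρ in (0:ℝ)..r, A * (K+1) ^ (n+1) * ρ ^ (n+1) / ((Nat.factorial (n+1)) : ℝ)| := by
      apply intervalIntegral.norm_integral_le_abs_of_norm_le _ (hgc.intervalIntegrable 0 r)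
      refine (MeasureTheory.ae_restrict_iff' measurableSet_uIoc).mpr
        (Filter.Eventually.of_forall fun ρ hρ => ?_)
      rw [Set.uIoc_of_le hr0] at hρ
      exact key ρ hρ.1.le hρ.2
    have h2 : (∫ ρ in (0:ℝ)..r, A * (K+1) ^ (n+1) * ρ ^ (n+1) / ((Nat.factorial (n+1)) : ℝ))
        = (A * (K+1) ^ (n+1) / (Nat.factorial (n+1))) * (r ^ (n+2) / (n+2)) := by
      have e4 : (fun ρ:ℝ => A * (K+1) ^ (n+1) * ρ ^ (n+1) / ((Nat.factorial (n+1)) : ℝ))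
          = fun ρ:ℝ => (A * (K+1) ^ (n+1) / (Nat.factorial (n+1))) * ρ ^ (n+1) := by
        funext ρ; ring
      rw [e4, intervalIntegral.integral_const_mul, integral_pow]
      have hz : (0:ℝ) ^ (n + 1 + 1) = 0 := by simp
      rw [hz]
      push_cast
      ring
    have h4 : (0:ℝ) ≤ (A * (K+1) ^ (n+1) / (Nat.factorial (n+1))) * (r ^ (n+2) / (n+2)) := by
      positivity
    rw [h2, abs_of_nonneg h4] at h1
    have hfac2 : ((Nat.factorial (n+2) : ℝ)) = (n+2) * (Nat.factorial (n+1)) := by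
      rw [Nat.factorial_succ]; push_cast; ring
    have h5 : (A * (K+1) ^ (n+1) / (Nat.factorial (n+1))) * (r ^ (n+2) / (n+2))
        = A * (K+1) ^ (n+1) * r ^ (n+2) / (Nat.factorial (n+2)) := by
      rw [hfac2, div_mul_div_comm, mul_comm ((Nat.factorial (n+1)):ℝ) ((n:ℝ)+2)]
    rw [h5] at h1
    exact h1

lemma flow_differentiableAt_nonneg {Φ : ℝ → R2 → R2} (hu : SmoothVF u) (hΦ : IsFlowOf u Φ)
    (t : ℝ) (ht : 0 ≤ t) (x : R2) : DifferentiableAt ℝ (Φ t) x := by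
  obtain ⟨M, K, C, hM0, hK0, hC0, hM, hK, hKlip, hC⟩ := vf_constants hu
  have hPic := pic_props hu.1 hK0 hK
  set A := K + C*M*(1+K*t)*Real.exp (K*t) with hA
  have hA0 : 0 ≤ A := by positivity
  set b : ℕ → ℝ := fun n => A * (K+1) ^ n * t ^ (n+1) / (Nat.factorial (n+1)) with hb
  have hb0 : ∀ n, 0 ≤ b n := by
    intro n; rw [hb]; positivity
  have hbound : ∀ (n : ℕ) (y : R2), ‖QPic u (n+1) t y - QPic u n t y‖ ≤ b n := by
    intro n y
    exact qpic_cauchy hu.1 hΦ hM0 hK0 hC0 hM hK hKlip hC t ht n t ht le_rfl y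
  have hsum : Summable b := by
    have hcomp : ∀ n, b n ≤ (A * t) * (((K+1)*t) ^ n / (Nat.factorial n)) := by
      intro n
      have hfle : ((Nat.factorial n : ℝ)) ≤ (Nat.factorial (n+1) : ℝ) := by
        exact_mod_cast Nat.factorial_le (Nat.le_succ n)
      have hfp : (0:ℝ) < (Nat.factorial n : ℝ) := by exact_mod_cast Nat.factorial_pos n
      calc b n ≤ A * (K+1) ^ n * t ^ (n+1) / (Nat.factorial n) := by
            rw [hb]
            exact div_le_div_of_nonneg_left (by positivity) hfp hfle
      _ = (A * t) * (((K+1)*t) ^ n / (Nat.factorial n)) := by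
            rw [mul_pow]; ring
    exact Summable.of_nonneg_of_le hb0 hcomp
      ((Real.summable_pow_div_factorial ((K+1)*t)).mul_left (A*t))
  have hUC : UniformCauchySeqOn (fun n y => QPic u n t y) Filter.atTop Set.univ := by
    rw [Metric.uniformCauchySeqOn_iff]
    intro ε hε
    have hS : CauchySeq (fun N => ∑ k ∈ Finset.range N, b k) :=
      hsum.hasSum.tendsto_sum_nat.cauchySeq
    obtain ⟨N, hN⟩ := Metric.cauchySeq_iff.mp hS ε hε
    refine ⟨N, fun m hm k hk y _ => ?_⟩
    have mono : ∀ p q : ℕ, N ≤ p → p ≤ q → dist (QPic u q t y) (QPic u p t y) < ε := by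
      intro p q hNp hpq
      have h1 : dist (QPic u p t y) (QPic u q t y) ≤ ∑ i ∈ Finset.Ico p q, b i := by
        apply dist_le_Ico_sum_of_dist_le hpq
        intro i hip hiq
        rw [dist_eq_norm, norm_sub_rev]
        exact hbound i y
      have h2 : ∑ i ∈ Finset.Ico p q, b i
          = (∑ i ∈ Finset.range q, b i) - (∑ i ∈ Finset.range p, b i) :=
        Finset.sum_Ico_eq_sub _ hpq
      have h3 := hN q (le_trans hNp hpq) p hNp
      rw [Real.dist_eq] at h3
      rw [dist_comm]
      calc dist (QPic u p t y) (QPic u q t y) ≤ ∑ i ∈ Finset.Ico p q, b i := h1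
      _ = (∑ i ∈ Finset.range q, b i) - (∑ i ∈ Finset.range p, b i) := h2
      _ ≤ |(∑ i ∈ Finset.range q, b i) - (∑ i ∈ Finset.range p, b i)| := le_abs_self _
      _ < ε := h3
    rcases le_total k m with h | h
    · exact mono k m hk h
    · rw [dist_comm]; exact mono m k hm h
  have hptwise : ∀ y : R2, ∃ L, Filter.Tendsto (fun n => QPic u n t y) Filter.atTop (𝓝 L) := by
    intro y
    apply cauchySeq_tendsto_of_complete
    apply cauchySeq_of_dist_le_of_summable b _ hsum
    intro n
    rw [dist_eq_norm, norm_sub_rev]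
    exact hbound n y
  choose g hg using hptwise
  have hTU : TendstoUniformly (fun n y => QPic u n t y) g Filter.atTop := by
    rw [← tendstoUniformlyOn_univ]
    exact hUC.tendstoUniformlyOn_of_tendsto (fun y _ => hg y)
  have hfg : ∀ y : R2, Filter.Tendsto (fun n => Pic u n t y) Filter.atTop (𝓝 (Φ t y)) := by
    intro y
    rw [tendsto_iff_dist_tendsto_zero]
    have hbd : ∀ n, dist (Pic u n t y) (Φ t y) ≤ M * K ^ n * t ^ (n+1) / (Nat.factorial (n+1)) := by
      intro n
      rw [dist_eq_norm]
      exact pic_conv hu.1 hΦ hK0 hK hM hKlip n t ht y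
    apply squeeze_zero (fun n => dist_nonneg) hbd
    have hb2 : ∀ n, M * K ^ n * t ^ (n+1) / ((Nat.factorial (n+1)):ℝ)
        ≤ (M*t) * ((K*t) ^ n / (Nat.factorial n)) := by
      intro n
      have hfle : ((Nat.factorial n : ℝ)) ≤ (Nat.factorial (n+1) : ℝ) := by
        exact_mod_cast Nat.factorial_le (Nat.le_succ n)
      have hfp : (0:ℝ) < (Nat.factorial n : ℝ) := by exact_mod_cast Nat.factorial_pos n
      calc M * K ^ n * t ^ (n+1) / ((Nat.factorial (n+1)):ℝ)
          ≤ M * K ^ n * t ^ (n+1) / (Nat.factorial n) :=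
            div_le_div_of_nonneg_left (by positivity) hfp hfle
      _ = (M*t) * ((K*t) ^ n / (Nat.factorial n)) := by rw [mul_pow]; ring
    apply squeeze_zero (fun n => by positivity) hb2
    have := (FloorSemiring.tendsto_pow_div_factorial_atTop (K*t)).const_mul (M*t)
    simpa using this
  have hmain := hasFDerivAt_of_tendstoUniformly hTU
    (fun n y => (hPic n).2.2.1 t ht y) hfg x
  exact hmain.differentiableAt

end PicProps

lemma flow_differentiableAt {u : R2 → R2} {Φ : ℝ → R2 → R2}
    (hu : SmoothVF u) (hΦ : IsFlowOf u Φ) (t : ℝ) (x : R2) :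
    DifferentiableAt ℝ (Φ t) x := by
  rcases le_or_gt 0 t with ht | ht
  · exact flow_differentiableAt_nonneg hu hΦ t ht x
  · set nu : R2 → R2 := fun y => -(u y) with hnu
    set rΦ : ℝ → R2 → R2 := fun r y => Φ (-r) y with hrΦ
    have hnus : SmoothVF nu := ⟨hu.1.neg, fun m y => by simp [hnu, hu.2 m y]⟩
    have hrF : IsFlowOf nu rΦ := by
      refine ⟨fun y => by simp [hrΦ, hΦ.1], ?_, ?_, ?_⟩
      · intro y r
        have h := (hΦ.2.1 y (-r)).scomp r (hasDerivAt_neg r)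
        simpa [hrΦ, hnu, Function.comp_def] using h
      · intro a c y
        show Φ (-(a + c)) y = Φ (-a) (Φ (-c) y)
        rw [show -(a+c) = -a + -c by ring, hΦ.2.2.1]
      · intro r m y
        exact hΦ.2.2.2 (-r) m y
    have hd := flow_differentiableAt_nonneg hnus hrF (-t) (by linarith) x
    have : rΦ (-t) = Φ t := by
      funext y; simp [hrΦ]
    rwa [this] at hd

/-- Pushforward of the vector field by its own flow. -/
lemma flow_pushforward {u : R2 → R2} {Φ : ℝ → R2 → R2}
    (hu : SmoothVF u) (hΦ : IsFlowOf u Φ) (t : ℝ) (x : R2) :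
    fderiv ℝ (Φ t) x (u x) = u (Φ t x) := by
  have hd := flow_differentiableAt hu hΦ t x
  have h1 : HasDerivAt (fun τ => Φ (τ + t) x) (u (Φ t x)) 0 := by
    have hg : HasDerivAt (fun s => Φ s x) (u (Φ t x)) ((fun τ : ℝ => τ + t) 0) := by
      simpa using hΦ.2.1 x t
    have h := hg.scomp 0 ((hasDerivAt_id (0:ℝ)).add_const t)
    simpa [Function.comp_def] using h
  have h2 : HasDerivAt (fun τ => Φ t (Φ τ x)) (fderiv ℝ (Φ t) x (u x)) 0 := by
    have hg : HasFDerivAt (Φ t) (fderiv ℝ (Φ t) x) ((fun τ => Φ τ x) 0) := by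
      show HasFDerivAt (Φ t) _ (Φ 0 x)
      rw [hΦ.1 x]
      exact hd.hasFDerivAt
    have hin : HasDerivAt (fun τ => Φ τ x) (u x) 0 := by
      have h := hΦ.2.1 x 0
      rwa [hΦ.1 x] at h
    exact hg.comp_hasDerivAt 0 hin
  have heq : (fun τ => Φ (τ + t) x) = fun τ => Φ t (Φ τ x) := by
    funext τ
    rw [add_comm]
    exact hΦ.2.2.1 t τ x
  rw [heq] at h1
  exact h2.unique h1

/-- Joint differentiability of the flow at time `0`. -/
lemma flow_joint_zero {u : R2 → R2} {Φ : ℝ → R2 → R2}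
    (hu : SmoothVF u) (hΦ : IsFlowOf u Φ) (y₀ : R2) :
    HasFDerivAt (fun p : ℝ × R2 => Φ p.1 p.2)
      ((ContinuousLinearMap.fst ℝ ℝ R2).smulRight (u y₀) +
        ContinuousLinearMap.snd ℝ ℝ R2) (0, y₀) := by
  obtain ⟨M, K, C, hM0, hK0, hC0, hM, hK, hKlip, hC⟩ := vf_constants hu
  rw [hasFDerivAt_iff_isLittleO_nhds_zero, Asymptotics.isLittleO_iff]
  intro c hc
  rw [Metric.eventually_nhds_iff]
  refine ⟨min 1 (c / (K*(M+1)+1)), by positivity, fun q hq => ?_⟩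
  rw [dist_zero_right] at hq
  have hq1 : ‖q‖ ≤ min 1 (c / (K*(M+1)+1)) := le_of_lt hq
  set α := q.1 with hα
  set ζ := q.2 with hζ
  set y := y₀ + ζ with hy
  have hfval : Φ ((0:ℝ) + α) (y₀ + ζ) = Φ α y := by rw [zero_add]
  have hLval : ((ContinuousLinearMap.fst ℝ ℝ R2).smulRight (u y₀) +
      ContinuousLinearMap.snd ℝ ℝ R2) q = α • u y₀ + ζ := by
    simp [ContinuousLinearMap.smulRight_apply, hα, hζ]
  have hint : Φ α y - y₀ - (α • u y₀ + ζ) = ∫ r in (0:ℝ)..α, (u (Φ r y) - u y₀) := by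
    have hrep := flow_integral hu.1.continuous hΦ α y
    have hconst : (∫ r in (0:ℝ)..α, u y₀) = α • u y₀ := by
      rw [intervalIntegral.integral_const, sub_zero]
    have hi : IntervalIntegrable (fun r => u (Φ r y)) MeasureTheory.volume 0 α :=
      (hu.1.continuous.comp (flow_cont hΦ y)).intervalIntegrable 0 α
    rw [intervalIntegral.integral_sub hi intervalIntegrable_const, hconst, hrep, hy]
    abel
  have hbnd : ∀ r ∈ Set.uIoc (0:ℝ) α, ‖u (Φ r y) - u y₀‖ ≤ K * (M * |α| + ‖ζ‖) := by
    intro r hr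
    have hrα : |r| ≤ |α| := by
      rcases Set.mem_uIoc.mp hr with ⟨h1, h2⟩ | ⟨h1, h2⟩
      · rw [abs_of_pos h1, abs_of_pos (lt_of_lt_of_le h1 h2)]; exact h2
      · have hα0 : α < 0 := lt_of_lt_of_le h1 h2
        rw [abs_of_nonpos h2, abs_of_neg hα0]
        linarith
    calc ‖u (Φ r y) - u y₀‖ ≤ K * ‖Φ r y - y₀‖ := hKlip _ _
    _ ≤ K * (M * |α| + ‖ζ‖) := by
        apply mul_le_mul_of_nonneg_left _ hK0
        have htri : ‖Φ r y - y₀‖ ≤ ‖Φ r y - y‖ + ‖y - y₀‖ := by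
          have := norm_sub_le_norm_sub_add_norm_sub (Φ r y) y y₀
          exact this
        have hyy : y - y₀ = ζ := by rw [hy]; abel
        calc ‖Φ r y - y₀‖ ≤ ‖Φ r y - y‖ + ‖y - y₀‖ := htri
        _ ≤ M * |r| + ‖ζ‖ := by
            rw [hyy]
            exact add_le_add (flow_move_bound hu.1.continuous hΦ hM r y) le_rfl
        _ ≤ M * |α| + ‖ζ‖ := by
            have := mul_le_mul_of_nonneg_left hrα hM0
            linarith
  have hE : ‖Φ ((0:ℝ) + α) (y₀ + ζ) - Φ 0 y₀ -
      ((ContinuousLinearMap.fst ℝ ℝ R2).smulRight (u y₀) +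
        ContinuousLinearMap.snd ℝ ℝ R2) q‖ ≤ (K * (M * |α| + ‖ζ‖)) * |α| := by
    rw [hfval, hLval, hΦ.1 y₀, hint]
    have := intervalIntegral.norm_integral_le_of_norm_le_const hbnd
    simpa using this
  have hα' : |α| ≤ ‖q‖ := by
    rw [← Real.norm_eq_abs]
    exact norm_fst_le q
  have hζ' : ‖ζ‖ ≤ ‖q‖ := norm_snd_le q
  have hq0 : 0 ≤ ‖q‖ := norm_nonneg q
  have hstep : (K * (M * |α| + ‖ζ‖)) * |α| ≤ (K * (M + 1) * ‖q‖) * ‖q‖ := by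
    have h1 : M * |α| + ‖ζ‖ ≤ (M + 1) * ‖q‖ := by
      have := mul_le_mul_of_nonneg_left hα' hM0
      nlinarith
    have h2 : K * (M * |α| + ‖ζ‖) ≤ K * ((M + 1) * ‖q‖) := mul_le_mul_of_nonneg_left h1 hK0
    have h3 : 0 ≤ K * (M * |α| + ‖ζ‖) := by positivity
    calc (K * (M * |α| + ‖ζ‖)) * |α| ≤ (K * ((M + 1) * ‖q‖)) * ‖q‖ :=
          mul_le_mul h2 hα' (abs_nonneg α) (by positivity)
    _ = (K * (M + 1) * ‖q‖) * ‖q‖ := by ring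
  have hfinal : (K * (M + 1) * ‖q‖) * ‖q‖ ≤ c * ‖q‖ := by
    apply mul_le_mul_of_nonneg_right _ hq0
    have hqc : ‖q‖ ≤ c / (K*(M+1)+1) := le_trans hq1 (min_le_right _ _)
    have hd0 : (0:ℝ) < K*(M+1)+1 := by positivity
    have : K * (M + 1) * ‖q‖ ≤ K * (M+1) * (c / (K*(M+1)+1)) :=
      mul_le_mul_of_nonneg_left hqc (by positivity)
    refine le_trans this ?_
    have h8 : K*(M+1)*(c/(K*(M+1)+1)) = c * (K*(M+1)/(K*(M+1)+1)) := by ring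
    have h9 : K*(M+1)/(K*(M+1)+1) ≤ 1 := by
      rw [div_le_one hd0]; linarith
    rw [h8]
    calc c * (K*(M+1)/(K*(M+1)+1)) ≤ c * 1 := mul_le_mul_of_nonneg_left h9 hc.le
    _ = c := mul_one c
  calc ‖Φ ((0:ℝ) + α) (y₀ + ζ) - Φ 0 y₀ -
      ((ContinuousLinearMap.fst ℝ ℝ R2).smulRight (u y₀) +
        ContinuousLinearMap.snd ℝ ℝ R2) q‖
      ≤ (K * (M * |α| + ‖ζ‖)) * |α| := hE
  _ ≤ (K * (M + 1) * ‖q‖) * ‖q‖ := hstep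
  _ ≤ c * ‖q‖ := hfinal

/-- Joint differentiability of the flow. -/
lemma flow_joint {u : R2 → R2} {Φ : ℝ → R2 → R2}
    (hu : SmoothVF u) (hΦ : IsFlowOf u Φ) (t₀ : ℝ) (x₀ : R2) :
    HasFDerivAt (fun p : ℝ × R2 => Φ p.1 p.2)
      ((ContinuousLinearMap.fst ℝ ℝ R2).smulRight (u (Φ t₀ x₀)) +
        (fderiv ℝ (Φ t₀) x₀).comp (ContinuousLinearMap.snd ℝ ℝ R2)) (t₀, x₀) := by
  have hd := flow_differentiableAt hu hΦ t₀ x₀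
  have hkey : (fun p : ℝ × R2 => Φ p.1 p.2)
      = (fun q : ℝ × R2 => Φ q.1 q.2) ∘ (fun p : ℝ × R2 => (p.1 - t₀, Φ t₀ p.2)) := by
    funext p
    show Φ p.1 p.2 = Φ (p.1 - t₀) (Φ t₀ p.2)
    rw [← hΦ.2.2.1 (p.1 - t₀) t₀ p.2, sub_add_cancel]
  have hA1 : HasFDerivAt (fun p : ℝ × R2 => p.1 - t₀)
      (ContinuousLinearMap.fst ℝ ℝ R2) (t₀, x₀) := (hasFDerivAt_fst).sub_const t₀
  have hA2 : HasFDerivAt (fun p : ℝ × R2 => Φ t₀ p.2)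
      ((fderiv ℝ (Φ t₀) x₀).comp (ContinuousLinearMap.snd ℝ ℝ R2)) (t₀, x₀) :=
    hd.hasFDerivAt.comp (t₀, x₀) hasFDerivAt_snd
  have hA := hA1.prodMk hA2
  have houter : HasFDerivAt (fun q : ℝ × R2 => Φ q.1 q.2)
      ((ContinuousLinearMap.fst ℝ ℝ R2).smulRight (u (Φ t₀ x₀)) +
        ContinuousLinearMap.snd ℝ ℝ R2)
      ((fun p : ℝ × R2 => (p.1 - t₀, Φ t₀ p.2)) (t₀, x₀)) := by
    show HasFDerivAt _ _ (t₀ - t₀, Φ t₀ x₀)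
    rw [sub_self]
    exact flow_joint_zero hu hΦ (Φ t₀ x₀)
  have hcomp := houter.comp (t₀, x₀) hA
  rw [← hkey] at hcomp
  have hder : (((ContinuousLinearMap.fst ℝ ℝ R2).smulRight (u (Φ t₀ x₀)) +
      ContinuousLinearMap.snd ℝ ℝ R2).comp
      ((ContinuousLinearMap.fst ℝ ℝ R2).prod
        ((fderiv ℝ (Φ t₀) x₀).comp (ContinuousLinearMap.snd ℝ ℝ R2))))
      = (ContinuousLinearMap.fst ℝ ℝ R2).smulRight (u (Φ t₀ x₀)) +
        (fderiv ℝ (Φ t₀) x₀).comp (ContinuousLinearMap.snd ℝ ℝ R2) := by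
    apply ContinuousLinearMap.ext
    intro p
    simp [ContinuousLinearMap.smulRight_apply]
  rwa [hder] at hcomp

/-- Condition B gives invertibility of `Umat`. -/
lemma umat_isUnit_det {u₀ u₁ : R2 → R2} (hB : CondB u₀ u₁) (z : R2) :
    IsUnit (Umat u₀ u₁ z).det := by
  have h0 : (EuclideanSpace.single 0 1 : R2) ∈ Submodule.span ℝ {u₀ z, u₁ z} := by
    rw [hB z]; trivial
  have h1 : (EuclideanSpace.single 1 1 : R2) ∈ Submodule.span ℝ {u₀ z, u₁ z} := by
    rw [hB z]; trivial
  rw [Submodule.mem_span_pair] at h0 h1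
  obtain ⟨a, b, hab⟩ := h0
  obtain ⟨c, d, hcd⟩ := h1
  have habi : ∀ i : Fin 2, a * u₀ z i + b * u₁ z i = (if i = 0 then (1:ℝ) else 0) := by
    intro i
    have := congrFun (congrArg WithLp.ofLp hab) i
    simpa [EuclideanSpace.single_apply] using this
  have hcdi : ∀ i : Fin 2, c * u₀ z i + d * u₁ z i = (if i = 1 then (1:ℝ) else 0) := by
    intro i
    have := congrFun (congrArg WithLp.ofLp hcd) i
    simpa [EuclideanSpace.single_apply] using this
  set B : Matrix (Fin 2) (Fin 2) ℝ := Matrix.of ![![b, d], ![a, c]] with hBdef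
  have hUB : Umat u₀ u₁ z * B = 1 := by
    ext i j
    rw [Matrix.mul_apply, Fin.sum_univ_two]
    fin_cases j
    · have := habi i
      simp [Umat, hBdef, Matrix.one_apply]
      linarith [habi i]
    · simp [Umat, hBdef, Matrix.one_apply]
      linarith [hcdi i]
  have hdet : (Umat u₀ u₁ z).det * B.det = 1 := by
    rw [← Matrix.det_mul, hUB, Matrix.det_one]
  exact IsUnit.of_mul_eq_one _ hdet

end FlowAux

theorem spatial_to_temporal_derivative_transfer
    (u₀ u₁ : R2 → R2) (Φ₀ Φ₁ : ℝ → R2 → R2)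
    (hu₀ : SmoothVF u₀) (hu₁ : SmoothVF u₁)
    (hΦ₀ : IsFlowOf u₀ Φ₀) (hΦ₁ : IsFlowOf u₁ Φ₁)
    (hB : CondB u₀ u₁) :
    ∀ h : R2 → ℝ, ContDiff ℝ 1 h → PeriodicR2 h →
      ∀ (x : R2) (s t : ℝ), 0 ≤ s → 0 ≤ t → ∀ ξ : R2,
        fderiv ℝ (fun y => h (Psi2 Φ₀ Φ₁ s t y)) x ξ =
          fderiv ℝ (fun p : ℝ × ℝ => h (Psi2 Φ₀ Φ₁ p.1 p.2 x)) (s, t)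
            (tauVec u₀ u₁ Φ₀ t x ξ) := by
  intro h hh hper x s t hs ht ξ
  have hz : True := trivial
  set z : R2 := Φ₀ (-t) x with hzdef
  set w : R2 := Φ₁ (-s) z with hwdef
  have hd0 : DifferentiableAt ℝ (Φ₀ (-t)) x := FlowAux.flow_differentiableAt hu₀ hΦ₀ (-t) x
  have hd1 : DifferentiableAt ℝ (Φ₁ (-s)) z := FlowAux.flow_differentiableAt hu₁ hΦ₁ (-s) z
  have hdh : DifferentiableAt ℝ h w := (hh.differentiable one_ne_zero) w
  set F₀ : R2 →L[ℝ] R2 := fderiv ℝ (Φ₀ (-t)) x with hF0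
  set G : R2 →L[ℝ] R2 := fderiv ℝ (Φ₁ (-s)) z with hG
  set Dh : R2 →L[ℝ] ℝ := fderiv ℝ h w with hDh
  -- LHS derivative
  have hLHS : HasFDerivAt (fun y => h (Psi2 Φ₀ Φ₁ s t y)) (Dh.comp (G.comp F₀)) x := by
    have h1 : HasFDerivAt (Φ₀ (-t)) F₀ x := hd0.hasFDerivAt
    have h2 : HasFDerivAt (Φ₁ (-s)) G ((Φ₀ (-t)) x) := hd1.hasFDerivAt
    have h3 : HasFDerivAt h Dh ((Φ₁ (-s)) ((Φ₀ (-t)) x)) := hdh.hasFDerivAt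
    exact h3.comp x (h2.comp x h1)
  -- RHS derivative
  have hfirst : HasFDerivAt (fun p : ℝ × ℝ => -p.1)
      (-(ContinuousLinearMap.fst ℝ ℝ ℝ)) (s, t) := hasFDerivAt_fst.neg
  have hin2 : HasFDerivAt (fun p : ℝ × ℝ => Φ₀ (-p.2) x)
      ((((1:ℝ →L[ℝ] ℝ).smulRight (u₀ z)).comp (-(ContinuousLinearMap.snd ℝ ℝ ℝ)))) (s, t) := by
    have hg : HasFDerivAt (fun r : ℝ => Φ₀ r x) ((1:ℝ →L[ℝ] ℝ).smulRight (u₀ z))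
        ((fun p : ℝ × ℝ => -p.2) (s, t)) := by
      show HasFDerivAt _ _ (-t)
      exact (hΦ₀.2.1 x (-t)).hasFDerivAt
    exact hg.comp (s, t) (hasFDerivAt_snd.neg)
  have hinner := hfirst.prodMk hin2
  have houter : HasFDerivAt (fun q : ℝ × R2 => Φ₁ q.1 q.2)
      ((ContinuousLinearMap.fst ℝ ℝ R2).smulRight (u₁ w) +
        G.comp (ContinuousLinearMap.snd ℝ ℝ R2))
      ((fun p : ℝ × ℝ => (-p.1, Φ₀ (-p.2) x)) (s, t)) := by
    show HasFDerivAt _ _ (-s, Φ₀ (-t) x)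
    exact FlowAux.flow_joint hu₁ hΦ₁ (-s) z
  have hdh2 : HasFDerivAt h Dh
      ((fun q : ℝ × R2 => Φ₁ q.1 q.2) ((fun p : ℝ × ℝ => (-p.1, Φ₀ (-p.2) x)) (s, t))) := by
    show HasFDerivAt h Dh (Φ₁ (-s) (Φ₀ (-t) x))
    exact hdh.hasFDerivAt
  have hRHS : HasFDerivAt (fun p : ℝ × ℝ => h (Psi2 Φ₀ Φ₁ p.1 p.2 x))
      (Dh.comp (((ContinuousLinearMap.fst ℝ ℝ R2).smulRight (u₁ w) +
        G.comp (ContinuousLinearMap.snd ℝ ℝ R2)).comp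
        ((-(ContinuousLinearMap.fst ℝ ℝ ℝ)).prod
          ((((1:ℝ →L[ℝ] ℝ).smulRight (u₀ z)).comp (-(ContinuousLinearMap.snd ℝ ℝ ℝ))))))) (s, t) := by
    have := hdh2.comp (s, t) (houter.comp (s, t) hinner); exact this
  rw [hLHS.fderiv, hRHS.fderiv]
  -- abbreviations for tau
  set ξv : Fin 2 → ℝ := fun i => ξ i with hξv
  set v : Fin 2 → ℝ := (tauM u₀ u₁ Φ₀ t x).mulVec ξv with hv
  have htauvec : tauVec u₀ u₁ Φ₀ t x ξ = (v 0, v 1) := rfl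
  rw [htauvec]
  -- matrix identities
  have hdet := FlowAux.umat_isUnit_det hB z
  have hFmF : Fmat Φ₀ t x = F₀ := rfl
  have hxi : ξ = ξ 0 • EuclideanSpace.single 0 1 + ξ 1 • EuclideanSpace.single 1 1 := by
    ext i; fin_cases i <;> simp [EuclideanSpace.single_apply]
  have hFsum : F₀ ξ = ξ 0 • F₀ (EuclideanSpace.single 0 1) + ξ 1 • F₀ (EuclideanSpace.single 1 1) := by
    conv_lhs => rw [hxi]
    rw [map_add, _root_.map_smul, _root_.map_smul]
  have hFm : (Matrix.of fun k l => Fmat Φ₀ t x (EuclideanSpace.single l 1) k).mulVec ξv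
      = fun k => F₀ ξ k := by
    funext k
    rw [hFmF, hFsum]
    simp [Matrix.mulVec, dotProduct, Fin.sum_univ_two, hξv]
    ring
  have hUv : (Umat u₀ u₁ z).mulVec v = fun k => -(F₀ ξ k) := by
    rw [hv]
    show (Umat u₀ u₁ z).mulVec
      ((-((Umat u₀ u₁ (Psi Φ₀ t x))⁻¹ *
        Matrix.of fun k l => Fmat Φ₀ t x (EuclideanSpace.single l 1) k)).mulVec ξv) = _
    have hzpsi : Psi Φ₀ t x = z := rfl
    rw [hzpsi, Matrix.neg_mulVec, Matrix.mulVec_neg, Matrix.mulVec_mulVec, ← Matrix.mul_assoc,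
      Matrix.mul_nonsing_inv _ hdet, Matrix.one_mul, hFm]
    funext k
    simp
  have hcoord : ∀ k : Fin 2, u₁ z k * v 0 + u₀ z k * v 1 = -(F₀ ξ k) := by
    intro k
    have hk := congrFun hUv k
    simpa [Matrix.mulVec, dotProduct, Fin.sum_univ_two, Umat] using hk
  have hF0eq : F₀ ξ = (-(v 0)) • u₁ z + (-(v 1)) • u₀ z := by
    ext k
    have hk := hcoord k
    have : ((-(v 0)) • u₁ z + (-(v 1)) • u₀ z) k = (-(v 0)) * u₁ z k + (-(v 1)) * u₀ z k := rfl
    rw [this]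
    linarith
  have hpush : G (u₁ z) = u₁ w := FlowAux.flow_pushforward hu₁ hΦ₁ (-s) z
  -- finish by computing both sides
  simp only [ContinuousLinearMap.comp_apply, ContinuousLinearMap.prod_apply,
    ContinuousLinearMap.neg_apply, ContinuousLinearMap.coe_fst', ContinuousLinearMap.coe_snd',
    ContinuousLinearMap.smulRight_apply, ContinuousLinearMap.one_apply,
    ContinuousLinearMap.add_apply]
  congr 1
  rw [hF0eq, map_add, _root_.map_smul, _root_.map_smul, hpush]
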